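/- For a positive definite real symmetric matrix D, the map X ↦ ∫_0^1 D^u X D^{1-u} du is the inverse of the map X ↦ ∫_0^∞ (D+tI)^{-1} X (D+tI)^{-1} dt on symmetric matrices. -/

import Mathlib

open MeasureTheory Matrix
attribute [local instance] Matrix.frobeniusNormedAddCommGroup Matrix.frobeniusNormedSpace

open MeasureTheory Real Set Filter

noncomputable def kap (a b : ℝ) : ℝ := ∫ t in Set.Ioi (0:ℝ), (a + t)⁻¹ * (b + t)⁻¹
noncomputable def mmu (a b : ℝ) : ℝ := ∫ u in Set.Icc (0:ℝ) 1, a ^ u * b ^ (1 - u)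

section scalar
variable {a b : ℝ} (ha : 0 < a) (hb : 0 < b)
include ha hb

private lemma Fderiv (t : ℝ) (ht : t ∈ Set.Ici (0:ℝ)) (hab : a ≠ b) :
    HasDerivAt (fun t => (Real.log (b + t) - Real.log (a + t)) / (a - b))
      ((a + t)⁻¹ * (b + t)⁻¹) t := by
  have ht0 : (0:ℝ) ≤ t := ht
  have h1 : HasDerivAt (fun t : ℝ => Real.log (b + t)) (b + t)⁻¹ t := by
    have := ((hasDerivAt_id t).const_add b).log (by positivity)
    simpa using this
  have h2 : HasDerivAt (fun t : ℝ => Real.log (a + t)) (a + t)⁻¹ t := by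
    have := ((hasDerivAt_id t).const_add a).log (by positivity)
    simpa using this
  have h := (h1.sub h2).div_const (a - b)
  refine h.congr_deriv (Eq.symm ?_)
  rw [eq_div_iff (sub_ne_zero.mpr hab)]
  have h3 : a + t ≠ 0 := by positivity
  have h4 : b + t ≠ 0 := by positivity
  field_simp
  ring_nf

private lemma Ftendsto (hab : a ≠ b) :
    Tendsto (fun t => (Real.log (b + t) - Real.log (a + t)) / (a - b)) atTop (nhds 0) := by
  have key : Tendsto (fun t : ℝ => Real.log (b + t) - Real.log (a + t)) atTop (nhds 0) := by
    have h1 : Tendsto (fun t : ℝ => (b + t) / (a + t)) atTop (nhds 1) := by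
      have heq : (fun t : ℝ => (b + t) / (a + t)) =ᶠ[atTop] fun t => 1 + (b - a) / (a + t) := by
        filter_upwards [eventually_gt_atTop 0] with t ht
        field_simp
        ring
      rw [tendsto_congr' heq]
      have h2 : Tendsto (fun t : ℝ => (b - a) / (a + t)) atTop (nhds 0) :=
        Tendsto.div_atTop tendsto_const_nhds (tendsto_atTop_add_const_left _ _ tendsto_id)
      simpa using (tendsto_const_nhds (x := (1:ℝ))).add h2
    have h3 : Tendsto (fun t : ℝ => Real.log ((b + t) / (a + t))) atTop (nhds 0) := by
      have := (Real.continuousAt_log (by norm_num : (1:ℝ) ≠ 0)).tendsto.comp h1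
      simpa [Function.comp_def] using this
    refine h3.congr' ?_
    filter_upwards [eventually_gt_atTop 0] with t ht
    rw [Real.log_div (by positivity) (by positivity)]
  simpa using key.div_const (a - b)

private lemma invtendsto : Tendsto (fun t : ℝ => -(a + t)⁻¹) atTop (nhds 0) := by
  have : Tendsto (fun t : ℝ => (a + t)⁻¹) atTop (nhds 0) :=
    Tendsto.inv_tendsto_atTop (tendsto_atTop_add_const_left _ _ tendsto_id)
  simpa using this.neg

end scalar

private lemma invderiv' {a : ℝ} (ha : 0 < a) (t : ℝ) (ht : t ∈ Set.Ici (0:ℝ)) :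
    HasDerivAt (fun t : ℝ => -(a + t)⁻¹) ((a + t)⁻¹ * (a + t)⁻¹) t := by
  have ht0 : (0:ℝ) ≤ t := ht
  have := (((hasDerivAt_id t).const_add a).inv (by positivity : a + t ≠ 0)).neg
  refine this.congr_deriv (Eq.symm ?_)
  rw [neg_div, neg_neg, sq, one_div, mul_inv]
  rfl

section scalar2
variable {a b : ℝ} (ha : 0 < a) (hb : 0 < b)
include ha hb

lemma kap_integrable : IntegrableOn (fun t => (a + t)⁻¹ * (b + t)⁻¹) (Set.Ioi (0:ℝ)) := by
  rcases eq_or_ne a b with rfl | hab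
  · exact integrableOn_Ioi_deriv_of_nonneg' (invderiv' ha)
      (fun t ht => by have : (0:ℝ) < t := ht; positivity) (invtendsto ha ha)
  · exact integrableOn_Ioi_deriv_of_nonneg'
      (fun t ht => Fderiv ha hb t ht hab)
      (fun t ht => by have : (0:ℝ) < t := ht; positivity)
      (Ftendsto ha hb hab)

lemma kap_eq : kap a b = if a = b then a⁻¹ else (Real.log a - Real.log b) / (a - b) := by
  rcases eq_or_ne a b with rfl | hab
  · have h := integral_Ioi_of_hasDerivAt_of_nonneg' (invderiv' ha)
      (fun t ht => by have : (0:ℝ) < t := ht; positivity) (invtendsto ha ha)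
    rw [if_pos rfl, kap, h]
    norm_num
  · have h := integral_Ioi_of_hasDerivAt_of_nonneg'
      (fun t ht => Fderiv ha hb t ht hab)
      (fun t ht => by have : (0:ℝ) < t := ht; positivity)
      (Ftendsto ha hb hab)
    rw [if_neg hab, kap, h]
    simp only [add_zero]
    rw [zero_sub, ← neg_div, neg_sub]

end scalar2

section mu
variable {a b : ℝ} (ha : 0 < a) (hb : 0 < b)
include ha hb

private lemma mu_pointwise (u : ℝ) :
    a ^ u * b ^ (1 - u) = b * Real.exp (u * (Real.log a - Real.log b)) :=
  calc a ^ u * b ^ (1 - u)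
      = Real.exp (Real.log a * u) * Real.exp (Real.log b * (1 - u)) := by
        rw [Real.rpow_def_of_pos ha, Real.rpow_def_of_pos hb]
    _ = Real.exp (Real.log b) * Real.exp (u * (Real.log a - Real.log b)) := by
        rw [← Real.exp_add, ← Real.exp_add]; ring_nf
    _ = b * Real.exp (u * (Real.log a - Real.log b)) := by rw [Real.exp_log hb]

lemma mu_integrable : IntegrableOn (fun u => a ^ u * b ^ (1 - u)) (Set.Icc (0:ℝ) 1) := by
  have : (fun u : ℝ => a ^ u * b ^ (1 - u))
      = fun u => b * Real.exp (u * (Real.log a - Real.log b)) :=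
    funext fun u => mu_pointwise ha hb u
  rw [this]
  exact (Continuous.continuousOn (by continuity)).integrableOn_Icc

lemma mu_eq : mmu a b = if a = b then a
    else (a - b) / (Real.log a - Real.log b) := by
  have hL : Real.exp (Real.log a - Real.log b) = a / b := by
    rw [Real.exp_sub, Real.exp_log ha, Real.exp_log hb]
  have key : mmu a b = b * ∫ u in (0:ℝ)..1, Real.exp (u * (Real.log a - Real.log b)) := by
    rw [mmu]
    simp only [mu_pointwise ha hb]
    rw [MeasureTheory.integral_Icc_eq_integral_Ioc,
      ← intervalIntegral.integral_of_le zero_le_one, intervalIntegral.integral_const_mul]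
  rcases eq_or_ne a b with rfl | hab
  · rw [if_pos rfl, key]
    simp
  · set L := Real.log a - Real.log b with hLdef
    have hLne : L ≠ 0 := by
      rw [hLdef, sub_ne_zero]
      exact fun h => hab (Real.log_injOn_pos (Set.mem_Ioi.2 ha) (Set.mem_Ioi.2 hb) h)
    have h2 : L * ∫ u in (0:ℝ)..1, Real.exp (L * u) = Real.exp L - 1 := by
      rw [intervalIntegral.mul_integral_comp_mul_left]
      simp [integral_exp]
    rw [if_neg hab, key]
    have h3 : (∫ u in (0:ℝ)..1, Real.exp (u * L)) = (Real.exp L - 1) / L := by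
      rw [eq_div_iff hLne, mul_comm]
      rw [← h2]
      congr 1
      exact intervalIntegral.integral_congr fun u _ => by rw [mul_comm]
    rw [h3, hL]
    field_simp

lemma kap_mul_mu : kap a b * mmu a b = 1 := by
  rw [kap_eq ha hb, mu_eq ha hb]
  rcases eq_or_ne a b with rfl | hab
  · simp [if_pos rfl, inv_mul_cancel₀ (ne_of_gt ha)]
  · rw [if_neg hab, if_neg hab]
    have h1 : a - b ≠ 0 := sub_ne_zero.mpr hab
    have h2 : Real.log a - Real.log b ≠ 0 := by
      rw [sub_ne_zero]
      exact fun h => hab (Real.log_injOn_pos (Set.mem_Ioi.2 ha) (Set.mem_Ioi.2 hb) h)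
    field_simp

end mu

open Matrix
attribute [local instance] Matrix.frobeniusNormedAddCommGroup Matrix.frobeniusNormedSpace

lemma conj_expand {n : ℕ} (U V M : Matrix (Fin n) (Fin n) ℝ) :
    U * M * V = ∑ i : Fin n, ∑ j : Fin n, M i j • (U * Matrix.single i j 1 * V) := by
  have h : ∀ i j : Fin n, Matrix.single i j (M i j) = M i j • Matrix.single i j (1:ℝ) :=
    fun i j => by rw [smul_single, smul_eq_mul, mul_one]
  conv_lhs => rw [matrix_eq_sum_single M]
  simp only [h, Finset.mul_sum, Finset.sum_mul, Matrix.mul_smul, Matrix.smul_mul]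

lemma key_integral {n : ℕ} (μ : MeasureTheory.Measure ℝ) (U V Y : Matrix (Fin n) (Fin n) ℝ)
    (f g : ℝ → Fin n → ℝ)
    (hfg : ∀ i j, MeasureTheory.Integrable (fun t => f t i * g t j) μ) :
    (∫ t, U * (Matrix.diagonal (f t) * Y * Matrix.diagonal (g t)) * V ∂μ)
      = U * Matrix.of (fun i j => (∫ t, f t i * g t j ∂μ) * Y i j) * V := by
  have hexp : ∀ t, U * (Matrix.diagonal (f t) * Y * Matrix.diagonal (g t)) * V
      = ∑ i : Fin n, ∑ j : Fin n,
          (f t i * g t j) • (Y i j • (U * Matrix.single i j 1 * V)) := by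
    intro t
    rw [conj_expand]
    refine Finset.sum_congr rfl fun i _ => Finset.sum_congr rfl fun j _ => ?_
    rw [smul_smul]
    congr 1
    rw [Matrix.mul_diagonal, Matrix.diagonal_mul]
    ring
  simp only [hexp]
  rw [MeasureTheory.integral_finset_sum _ (fun i _ => MeasureTheory.integrable_finset_sum _
    (fun j _ => ((hfg i j).smul_const _)))]
  rw [conj_expand U V]
  refine Finset.sum_congr rfl fun i _ => ?_
  rw [MeasureTheory.integral_finset_sum _ (fun j _ => ((hfg i j).smul_const _))]
  refine Finset.sum_congr rfl fun j _ => ?_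
  rw [integral_smul_const, Matrix.of_apply, mul_smul]


/-- The real power `D^u` of a hermitian matrix, via the spectral functional calculus. -/
noncomputable def matrixRpow {n : ℕ} {D : Matrix (Fin n) (Fin n) ℝ}
    (hD : D.IsHermitian) (u : ℝ) : Matrix (Fin n) (Fin n) ℝ :=
  hD.cfc (fun x => x ^ u)

/-- For a positive definite real symmetric matrix `D`, the map
`X ↦ ∫_0^1 D^u X D^{1-u} du` is inverse to `X ↦ ∫_0^∞ (D+tI)⁻¹ X (D+tI)⁻¹ dt`
on symmetric matrices. -/
theorem kubo_mori_inverse (n : ℕ) (D : Matrix (Fin n) (Fin n) ℝ)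
    (hD : D.PosDef) (hDs : D.IsSymm) :
    let G : Matrix (Fin n) (Fin n) ℝ → Matrix (Fin n) (Fin n) ℝ := fun X =>
      ∫ t in Set.Ioi (0:ℝ), (D + t • 1)⁻¹ * X * (D + t • 1)⁻¹
    let Ginv : Matrix (Fin n) (Fin n) ℝ → Matrix (Fin n) (Fin n) ℝ := fun X =>
      ∫ u in Set.Icc (0:ℝ) 1,
        matrixRpow hD.isHermitian u * X * matrixRpow hD.isHermitian (1 - u)
    ∀ X : Matrix (Fin n) (Fin n) ℝ, X.IsSymm → Ginv (G X) = X ∧ G (Ginv X) = X := by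
  intro G Ginv X hX
  set U : Matrix (Fin n) (Fin n) ℝ := (hD.isHermitian.eigenvectorUnitary : Matrix (Fin n) (Fin n) ℝ) with hUdef
  set lam : Fin n → ℝ := hD.isHermitian.eigenvalues with hlamdef
  have hlam : ∀ i, 0 < lam i := fun i => hD.eigenvalues_pos i
  have hU1 : U * star U = 1 := mem_unitaryGroup_iff.mp hD.isHermitian.eigenvectorUnitary.2
  have hU2 : star U * U = 1 := mem_unitaryGroup_iff'.mp hD.isHermitian.eigenvectorUnitary.2
  have hcan : ∀ M : Matrix (Fin n) (Fin n) ℝ, star U * (U * M) = M := fun M => by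
    rw [← Matrix.mul_assoc, hU2, Matrix.one_mul]
  have hcan2 : ∀ M : Matrix (Fin n) (Fin n) ℝ, U * (star U * M) = M := fun M => by
    rw [← Matrix.mul_assoc, hU1, Matrix.one_mul]
  have hconj2 : ∀ A B : Matrix (Fin n) (Fin n) ℝ,
      (U * A * star U) * (U * B * star U) = U * (A * B) * star U := fun A B => by
    simp only [Matrix.mul_assoc, hcan]
  have hconj3 : ∀ A M B : Matrix (Fin n) (Fin n) ℝ,
      (U * A * star U) * M * (U * B * star U)
        = U * (A * (star U * M * U) * B) * star U := fun A M B => by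
    simp only [Matrix.mul_assoc]
  have hclean : ∀ M : Matrix (Fin n) (Fin n) ℝ,
      star U * (U * M * star U) * U = M := fun M => by
    simp only [Matrix.mul_assoc, hcan, hU2, Matrix.mul_one]
  have hclean2 : ∀ M : Matrix (Fin n) (Fin n) ℝ,
      U * (star U * M * U) * star U = M := fun M => by
    simp only [Matrix.mul_assoc, hcan2, hU1, Matrix.mul_one]
  have hspec : D = U * Matrix.diagonal lam * star U := by
    have := hD.isHermitian.spectral_theorem
    simpa [RCLike.ofReal_real_eq_id] using this
  have hpow : ∀ u : ℝ, matrixRpow hD.isHermitian u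
      = U * Matrix.diagonal (fun i => lam i ^ u) * star U := by
    intro u
    simp only [matrixRpow, Matrix.IsHermitian.cfc, RCLike.ofReal_real_eq_id,
      Function.id_comp, Function.comp_def]
    rfl
  have hinv : ∀ t ∈ Set.Ioi (0:ℝ), (D + t • 1)⁻¹
      = U * Matrix.diagonal (fun i => (lam i + t)⁻¹) * star U := by
    intro t ht
    have ht0 : (0:ℝ) < t := ht
    have hDt : D + t • (1 : Matrix (Fin n) (Fin n) ℝ)
        = U * Matrix.diagonal (fun i => lam i + t) * star U := by
      have h1 : Matrix.diagonal (fun i : Fin n => lam i + t)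
          = Matrix.diagonal lam + t • 1 := by
        rw [Matrix.smul_one_eq_diagonal, ← Matrix.diagonal_add]
      rw [h1, Matrix.mul_add, Matrix.add_mul, ← hspec, Matrix.mul_smul, Matrix.smul_mul,
        Matrix.mul_one, hU1]
    apply Matrix.inv_eq_right_inv
    rw [hDt, hconj2, Matrix.diagonal_mul_diagonal]
    have h2 : (fun i => (lam i + t) * (lam i + t)⁻¹) = fun _ : Fin n => (1:ℝ) := by
      funext i
      exact mul_inv_cancel₀ (by have := hlam i; positivity)
    rw [h2, Matrix.diagonal_one, Matrix.mul_one, hU1]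
  have hG : ∀ Z : Matrix (Fin n) (Fin n) ℝ,
      (∫ t in Set.Ioi (0:ℝ), (D + t • 1)⁻¹ * Z * (D + t • 1)⁻¹)
        = U * Matrix.of (fun i j => kap (lam i) (lam j) * (star U * Z * U) i j)
            * star U := by
    intro Z
    rw [MeasureTheory.setIntegral_congr_fun measurableSet_Ioi
      (g := fun t => U * (Matrix.diagonal (fun i => (lam i + t)⁻¹) * (star U * Z * U)
        * Matrix.diagonal (fun i => (lam i + t)⁻¹)) * star U)
      (fun t ht => by rw [hinv t ht, hconj3])]
    exact key_integral _ U (star U) _ _ _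
      (fun i j => kap_integrable (hlam i) (hlam j))
  have hGinv : ∀ Z : Matrix (Fin n) (Fin n) ℝ,
      (∫ u in Set.Icc (0:ℝ) 1,
          matrixRpow hD.isHermitian u * Z * matrixRpow hD.isHermitian (1 - u))
        = U * Matrix.of (fun i j => mmu (lam i) (lam j) * (star U * Z * U) i j)
            * star U := by
    intro Z
    have h : ∀ u : ℝ, matrixRpow hD.isHermitian u * Z * matrixRpow hD.isHermitian (1 - u)
        = U * (Matrix.diagonal (fun i => lam i ^ u) * (star U * Z * U)
            * Matrix.diagonal (fun i => lam i ^ (1 - u))) * star U := fun u => by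
      rw [hpow, hpow, hconj3]
    simp only [h]
    exact key_integral _ U (star U) _ (fun u i => lam i ^ u) (fun u j => lam j ^ (1 - u))
      (fun i j => mu_integrable (hlam i) (hlam j))
  constructor
  · show (∫ u in Set.Icc (0:ℝ) 1,
        matrixRpow hD.isHermitian u * (∫ t in Set.Ioi (0:ℝ), (D + t • 1)⁻¹ * X * (D + t • 1)⁻¹)
          * matrixRpow hD.isHermitian (1 - u)) = X
    rw [hG X, hGinv]
    simp only [hclean, Matrix.of_apply]
    have h : (fun i j => mmu (lam i) (lam j) * (kap (lam i) (lam j) * (star U * X * U) i j))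
        = fun i j => (star U * X * U) i j := by
      funext i j
      rw [← mul_assoc, mul_comm (mmu _ _) (kap _ _), kap_mul_mu (hlam i) (hlam j), one_mul]
    rw [h]
    exact hclean2 X
  · show (∫ t in Set.Ioi (0:ℝ), (D + t • 1)⁻¹ * (∫ u in Set.Icc (0:ℝ) 1,
        matrixRpow hD.isHermitian u * X * matrixRpow hD.isHermitian (1 - u))
          * (D + t • 1)⁻¹) = X
    rw [hGinv X, hG]
    simp only [hclean, Matrix.of_apply]
    have h : (fun i j => kap (lam i) (lam j) * (mmu (lam i) (lam j) * (star U * X * U) i j))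
        = fun i j => (star U * X * U) i j := by
      funext i j
      rw [← mul_assoc, kap_mul_mu (hlam i) (hlam j), one_mul]
    rw [h]
    exact hclean2 X
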